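/- arXiv:2010.15505 — 3 statements merged into one kernel-verified Lean document; each statement's English description precedes it below -/
import Mathlib

section
/- For all real characteristics a, b, c, d, e, f, g, h and all complex numbers x₁, y₁, x₂, y₂, the generalized Göpel duplication formula holds: θ[a,c;b,d](x₁,y₁) · θ[e,g;f,h](x₂,y₂) = Σ_{(ε,δ)∈{0,1}²} Θ[(a+e)/2+ε, (c+g)/2+δ; b+f, d+h](x₁+x₂, y₁+y₂) · Θ[(a−e)/2+ε, (c−g)/2+δ; b−f, d−h](x₁−x₂, y₁−y₂). -/
open Complex

/-- Genus-two theta function with real characteristics `a c b d`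
(upper characteristics `a, c`, lower characteristics `b, d`),
moduli `τ₁ τ₂ τ₁₂` and complex arguments `x y`. -/
noncomputable def theta (τ₁ τ₂ τ₁₂ : ℂ) (a c b d : ℝ) (x y : ℂ) : ℂ :=
  ∑' p : ℤ × ℤ,
    Complex.exp
      ((Real.pi : ℂ) * Complex.I *
          (τ₁ * ((p.1 : ℂ) + (a : ℂ) / 2) ^ 2 + τ₂ * ((p.2 : ℂ) + (c : ℂ) / 2) ^ 2 +
            2 * τ₁₂ * ((p.1 : ℂ) + (a : ℂ) / 2) * ((p.2 : ℂ) + (c : ℂ) / 2)) +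
        2 * (Real.pi : ℂ) * Complex.I *
          (((p.1 : ℂ) + (a : ℂ) / 2) * (x + (b : ℂ) / 2) +
            ((p.2 : ℂ) + (c : ℂ) / 2) * (y + (d : ℂ) / 2)))

/-- The same theta function with doubled moduli `2τ₁, 2τ₂, 2τ₁₂`. -/
noncomputable def Theta2 (τ₁ τ₂ τ₁₂ : ℂ) (a c b d : ℝ) (x y : ℂ) : ℂ :=
  theta (2 * τ₁) (2 * τ₂) (2 * τ₁₂) a c b d x y


noncomputable def Tterm (τ₁ τ₂ τ₁₂ : ℂ) (a c b d : ℝ) (x y : ℂ) (p : ℤ × ℤ) : ℂ :=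
  Complex.exp
    ((Real.pi : ℂ) * Complex.I *
        (τ₁ * ((p.1 : ℂ) + (a : ℂ) / 2) ^ 2 + τ₂ * ((p.2 : ℂ) + (c : ℂ) / 2) ^ 2 +
          2 * τ₁₂ * ((p.1 : ℂ) + (a : ℂ) / 2) * ((p.2 : ℂ) + (c : ℂ) / 2)) +
      2 * (Real.pi : ℂ) * Complex.I *
        (((p.1 : ℂ) + (a : ℂ) / 2) * (x + (b : ℂ) / 2) +
          ((p.2 : ℂ) + (c : ℂ) / 2) * (y + (d : ℂ) / 2)))

lemma norm_Tterm (τ₁ τ₂ τ₁₂ : ℂ) (a c b d : ℝ) (x y : ℂ) (p : ℤ × ℤ) :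
    ‖Tterm τ₁ τ₂ τ₁₂ a c b d x y p‖ =
      Real.exp (-Real.pi * (τ₁.im * ((p.1 : ℝ) + a / 2) ^ 2 + τ₂.im * ((p.2 : ℝ) + c / 2) ^ 2 +
          2 * τ₁₂.im * ((p.1 : ℝ) + a / 2) * ((p.2 : ℝ) + c / 2)) -
        2 * Real.pi * (((p.1 : ℝ) + a / 2) * x.im + ((p.2 : ℝ) + c / 2) * y.im)) := by
  rw [Tterm, Complex.norm_exp]
  congr 1
  have h1 : ((p.1 : ℂ) + (a : ℂ) / 2) = (((p.1 : ℝ) + a / 2 : ℝ) : ℂ) := by push_cast; ring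
  have h2 : ((p.2 : ℂ) + (c : ℂ) / 2) = (((p.2 : ℝ) + c / 2 : ℝ) : ℂ) := by push_cast; ring
  rw [h1, h2]
  simp [Complex.add_re, Complex.mul_re, Complex.mul_im, Complex.add_im, Complex.I_re,
    Complex.I_im, Complex.ofReal_re, Complex.ofReal_im, sq]
  ring

-- 1D summability helper
lemma summable_1d {cc S : ℝ} (hc : 0 < cc) :
    Summable fun n : ℤ => Real.exp (-Real.pi * (cc * n ^ 2 - 2 * S * |n|)) := by
  simpa using summable_pow_mul_jacobiTheta₂_term_bound S hc 0

set_option maxHeartbeats 1000000 in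
lemma summable_norm_Tterm (τ₁ τ₂ τ₁₂ : ℂ)
    (hτ₁ : 0 < τ₁.im) (hτ₂ : 0 < τ₂.im) (hτ : τ₁₂.im ^ 2 < τ₁.im * τ₂.im)
    (a c b d : ℝ) (x y : ℂ) :
    Summable fun p : ℤ × ℤ => ‖Tterm τ₁ τ₂ τ₁₂ a c b d x y p‖ := by
  set t₁ := τ₁.im with ht₁
  set t₂ := τ₂.im with ht₂
  set t₁₂ := τ₁₂.im with ht₁₂
  set α : ℝ := (t₁₂ ^ 2 / t₁ + t₂) / 2 with hα
  have hd : 0 ≤ t₁₂ ^ 2 / t₁ := by positivity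
  have hlt : t₁₂ ^ 2 / t₁ < t₂ := by
    rw [div_lt_iff₀ hτ₁]; linarith [hτ]
  have hα0 : 0 < α := by rw [hα]; linarith
  have hα1 : t₁₂ ^ 2 / t₁ < α := by rw [hα]; linarith
  have hα2 : α < t₂ := by rw [hα]; linarith
  set c₁ : ℝ := t₁ - t₁₂ ^ 2 / α with hc₁def
  set c₂ : ℝ := t₂ - α with hc₂def
  have hc₁ : 0 < c₁ := by
    rw [hc₁def]
    have : t₁₂ ^ 2 / α < t₁ := by
      rw [div_lt_iff₀ hα0]
      calc t₁₂ ^ 2 < α * t₁ := by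
            have := (div_lt_iff₀ hτ₁).mp hα1; linarith
        _ = t₁ * α := by ring
    linarith
  have hc₂ : 0 < c₂ := by simp only [hc₂def]; linarith
  set S₁ : ℝ := c₁ * |a| / 2 + |x.im| with hS₁
  set S₂ : ℝ := c₂ * |c| / 2 + |y.im| with hS₂
  set K₁ : ℝ := 2 * Real.pi * (|a| / 2) * |x.im| with hK₁
  set K₂ : ℝ := 2 * Real.pi * (|c| / 2) * |y.im| with hK₂
  have hu : Summable fun m : ℤ =>
      Real.exp K₁ * Real.exp (-Real.pi * (c₁ * m ^ 2 - 2 * S₁ * |m|)) :=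
    (summable_1d hc₁).mul_left _
  have hv : Summable fun n : ℤ =>
      Real.exp K₂ * Real.exp (-Real.pi * (c₂ * n ^ 2 - 2 * S₂ * |n|)) :=
    (summable_1d hc₂).mul_left _
  have hprod := hu.mul_of_nonneg hv (fun m => by positivity) (fun n => by positivity)
  refine Summable.of_nonneg_of_le (fun p => norm_nonneg _) (fun p => ?_) hprod
  rw [norm_Tterm]
  rw [← Real.exp_add, ← Real.exp_add, ← Real.exp_add]
  apply Real.exp_le_exp.mpr
  have hpi := Real.pi_pos
  -- quadratic bound
  have hQ : c₁ * ((p.1 : ℝ) + a / 2) ^ 2 + c₂ * ((p.2 : ℝ) + c / 2) ^ 2 ≤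
      t₁ * ((p.1 : ℝ) + a / 2) ^ 2 + t₂ * ((p.2 : ℝ) + c / 2) ^ 2 +
        2 * t₁₂ * ((p.1 : ℝ) + a / 2) * ((p.2 : ℝ) + c / 2) := by
    have key : t₁₂ ^ 2 / α * ((p.1 : ℝ) + a / 2) ^ 2 + α * ((p.2 : ℝ) + c / 2) ^ 2 +
        2 * t₁₂ * ((p.1 : ℝ) + a / 2) * ((p.2 : ℝ) + c / 2) =
        (t₁₂ * ((p.1 : ℝ) + a / 2) + α * ((p.2 : ℝ) + c / 2)) ^ 2 / α := by
      field_simp; ring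
    have hge : 0 ≤ t₁₂ ^ 2 / α * ((p.1 : ℝ) + a / 2) ^ 2 + α * ((p.2 : ℝ) + c / 2) ^ 2 +
        2 * t₁₂ * ((p.1 : ℝ) + a / 2) * ((p.2 : ℝ) + c / 2) := by
      rw [key]; positivity
    simp only [hc₁def, hc₂def]; nlinarith [hge]
  have habs1 : |(p.1 : ℝ) + a / 2| ≤ |(p.1 : ℝ)| + |a| / 2 := by
    calc |(p.1 : ℝ) + a / 2| ≤ |(p.1 : ℝ)| + |a / 2| := abs_add_le _ _
      _ = |(p.1 : ℝ)| + |a| / 2 := by rw [abs_div]; norm_num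
  have habs2 : |(p.2 : ℝ) + c / 2| ≤ |(p.2 : ℝ)| + |c| / 2 := by
    calc |(p.2 : ℝ) + c / 2| ≤ |(p.2 : ℝ)| + |c / 2| := abs_add_le _ _
      _ = |(p.2 : ℝ)| + |c| / 2 := by rw [abs_div]; norm_num
  have hsq1 : (p.1 : ℝ) ^ 2 - |a| * |(p.1 : ℝ)| ≤ ((p.1 : ℝ) + a / 2) ^ 2 := by
    have h1 : -(|a| * |(p.1 : ℝ)|) ≤ a * (p.1 : ℝ) := by
      rw [← abs_mul]; exact neg_abs_le _
    nlinarith [sq_nonneg a]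
  have hsq2 : (p.2 : ℝ) ^ 2 - |c| * |(p.2 : ℝ)| ≤ ((p.2 : ℝ) + c / 2) ^ 2 := by
    have h1 : -(|c| * |(p.2 : ℝ)|) ≤ c * (p.2 : ℝ) := by
      rw [← abs_mul]; exact neg_abs_le _
    nlinarith [sq_nonneg c]
  have hlin1 : -(((p.1 : ℝ) + a / 2) * x.im) ≤ (|(p.1 : ℝ)| + |a| / 2) * |x.im| := by
    calc -(((p.1 : ℝ) + a / 2) * x.im) ≤ |((p.1 : ℝ) + a / 2) * x.im| := neg_le_abs _
      _ = |(p.1 : ℝ) + a / 2| * |x.im| := abs_mul _ _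
      _ ≤ (|(p.1 : ℝ)| + |a| / 2) * |x.im| :=
          mul_le_mul_of_nonneg_right habs1 (abs_nonneg _)
  have hlin2 : -(((p.2 : ℝ) + c / 2) * y.im) ≤ (|(p.2 : ℝ)| + |c| / 2) * |y.im| := by
    calc -(((p.2 : ℝ) + c / 2) * y.im) ≤ |((p.2 : ℝ) + c / 2) * y.im| := neg_le_abs _
      _ = |(p.2 : ℝ) + c / 2| * |y.im| := abs_mul _ _
      _ ≤ (|(p.2 : ℝ)| + |c| / 2) * |y.im| :=
          mul_le_mul_of_nonneg_right habs2 (abs_nonneg _)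
  have e1 := mul_le_mul_of_nonneg_left hQ hpi.le
  have e2 := mul_le_mul_of_nonneg_left hsq1 (by positivity : (0:ℝ) ≤ Real.pi * c₁)
  have e3 := mul_le_mul_of_nonneg_left hsq2 (by positivity : (0:ℝ) ≤ Real.pi * c₂)
  have e4 := mul_le_mul_of_nonneg_left hlin1 (by positivity : (0:ℝ) ≤ 2 * Real.pi)
  have e5 := mul_le_mul_of_nonneg_left hlin2 (by positivity : (0:ℝ) ≤ 2 * Real.pi)
  have habs1' : |((p.1 : ℤ) : ℝ)| = ((|p.1| : ℤ) : ℝ) := by push_cast; simp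
  have habs2' : |((p.2 : ℤ) : ℝ)| = ((|p.2| : ℤ) : ℝ) := by push_cast; simp
  simp only [hS₁, hS₂, hK₁, hK₂]
  rw [← habs1', ← habs2'] at *
  linarith [e1, e2, e3, e4, e5]

lemma theta_eq (τ₁ τ₂ τ₁₂ : ℂ) (a c b d : ℝ) (x y : ℂ) :
    theta τ₁ τ₂ τ₁₂ a c b d x y = ∑' p : ℤ × ℤ, Tterm τ₁ τ₂ τ₁₂ a c b d x y p := rfl

-- parity sets
def PS (ε δ : ℤ) : Set ((ℤ × ℤ) × (ℤ × ℤ)) :=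
  {pq | (pq.1.1 - pq.2.1) % 2 = ε ∧ (pq.1.2 - pq.2.2) % 2 = δ}

-- folding map
def ψ (ε δ : ℤ) (x : (ℤ × ℤ) × (ℤ × ℤ)) : (ℤ × ℤ) × (ℤ × ℤ) :=
  ((x.1.1 + x.2.1 + ε, x.1.2 + x.2.2 + δ), (x.1.1 - x.2.1, x.1.2 - x.2.2))

lemma ψ_inj (ε δ : ℤ) : Function.Injective (ψ ε δ) := by
  rintro ⟨⟨p₁, p₂⟩, ⟨q₁, q₂⟩⟩ ⟨⟨p₁', p₂'⟩, ⟨q₁', q₂'⟩⟩ hx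
  simp only [ψ, Prod.mk.injEq] at hx
  obtain ⟨⟨h1, h2⟩, h3, h4⟩ := hx
  simp only [Prod.mk.injEq]
  omega

lemma ψ_mem (ε δ : ℤ) (hε : ε = 0 ∨ ε = 1) (hδ : δ = 0 ∨ δ = 1)
    (x : (ℤ × ℤ) × (ℤ × ℤ)) : ψ ε δ x ∈ PS ε δ := by
  simp only [ψ, PS, Set.mem_setOf_eq]
  omega

lemma ψ_range (ε δ : ℤ) (hε : ε = 0 ∨ ε = 1) (hδ : δ = 0 ∨ δ = 1)
    (pq : (ℤ × ℤ) × (ℤ × ℤ)) (hpq : pq ∈ PS ε δ) : pq ∈ Set.range (ψ ε δ) := by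
  obtain ⟨⟨m, n⟩, ⟨m', n'⟩⟩ := pq
  simp only [PS, Set.mem_setOf_eq] at hpq
  refine ⟨(((m + m' - ε) / 2, (n + n' - δ) / 2), ((m - m' - ε) / 2, (n - n' - δ) / 2)), ?_⟩
  simp only [ψ, Prod.mk.injEq]
  omega

lemma Tterm_mul (τ₁ τ₂ τ₁₂ : ℂ) (a c b d a' c' b' d' : ℝ) (x₁ y₁ x₂ y₂ : ℂ)
    (ε δ : ℕ) (p q : ℤ × ℤ) :
    Tterm τ₁ τ₂ τ₁₂ a c b d x₁ y₁ (p.1 + q.1 + (ε : ℤ), p.2 + q.2 + (δ : ℤ)) *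
      Tterm τ₁ τ₂ τ₁₂ a' c' b' d' x₂ y₂ (p.1 - q.1, p.2 - q.2) =
    Tterm (2 * τ₁) (2 * τ₂) (2 * τ₁₂) ((a + a') / 2 + ε) ((c + c') / 2 + δ)
        (b + b') (d + d') (x₁ + x₂) (y₁ + y₂) p *
      Tterm (2 * τ₁) (2 * τ₂) (2 * τ₁₂) ((a - a') / 2 + ε) ((c - c') / 2 + δ)
        (b - b') (d - d') (x₁ - x₂) (y₁ - y₂) q := by
  simp only [Tterm]
  rw [← Complex.exp_add, ← Complex.exp_add]
  congr 1
  push_cast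
  ring

lemma summable_norm_Tterm2 (τ₁ τ₂ τ₁₂ : ℂ)
    (hτ₁ : 0 < τ₁.im) (hτ₂ : 0 < τ₂.im) (hτ : τ₁₂.im ^ 2 < τ₁.im * τ₂.im)
    (a c b d : ℝ) (x y : ℂ) :
    Summable fun p : ℤ × ℤ => ‖Tterm (2 * τ₁) (2 * τ₂) (2 * τ₁₂) a c b d x y p‖ := by
  apply summable_norm_Tterm
  · simpa using hτ₁
  · simpa using hτ₂
  · have h1 : (2 * τ₁).im = 2 * τ₁.im := by simp
    have h2 : (2 * τ₂).im = 2 * τ₂.im := by simp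
    have h3 : (2 * τ₁₂).im = 2 * τ₁₂.im := by simp
    rw [h1, h2, h3]; nlinarith

lemma piece_eq (τ₁ τ₂ τ₁₂ : ℂ)
    (hτ₁ : 0 < τ₁.im) (hτ₂ : 0 < τ₂.im) (hτ : τ₁₂.im ^ 2 < τ₁.im * τ₂.im)
    (a c b d a' c' b' d' : ℝ) (x₁ y₁ x₂ y₂ : ℂ) (ε δ : ℕ) (hε : ε < 2) (hδ : δ < 2) :
    ∑' pq : (ℤ × ℤ) × (ℤ × ℤ),
      Set.indicator (PS (ε : ℤ) (δ : ℤ))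
        (fun pq => Tterm τ₁ τ₂ τ₁₂ a c b d x₁ y₁ pq.1 *
          Tterm τ₁ τ₂ τ₁₂ a' c' b' d' x₂ y₂ pq.2) pq =
    Theta2 τ₁ τ₂ τ₁₂ ((a + a') / 2 + ε) ((c + c') / 2 + δ) (b + b') (d + d')
        (x₁ + x₂) (y₁ + y₂) *
      Theta2 τ₁ τ₂ τ₁₂ ((a - a') / 2 + ε) ((c - c') / 2 + δ) (b - b') (d - d')
        (x₁ - x₂) (y₁ - y₂) := by
  have hε' : (ε : ℤ) = 0 ∨ (ε : ℤ) = 1 := by omega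
  have hδ' : (δ : ℤ) = 0 ∨ (δ : ℤ) = 1 := by omega
  have SA := summable_norm_Tterm2 τ₁ τ₂ τ₁₂ hτ₁ hτ₂ hτ
    ((a + a') / 2 + ε) ((c + c') / 2 + δ) (b + b') (d + d') (x₁ + x₂) (y₁ + y₂)
  have SB := summable_norm_Tterm2 τ₁ τ₂ τ₁₂ hτ₁ hτ₂ hτ
    ((a - a') / 2 + ε) ((c - c') / 2 + δ) (b - b') (d - d') (x₁ - x₂) (y₁ - y₂)
  rw [Theta2, Theta2, theta_eq, theta_eq, tsum_mul_tsum_of_summable_norm SA SB]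
  rw [← Function.Injective.tsum_eq (ψ_inj (ε : ℤ) (δ : ℤ))
    (fun pq hpq => ψ_range _ _ hε' hδ' pq (Set.support_indicator_subset hpq))]
  apply tsum_congr
  intro x
  rw [Set.indicator_of_mem (ψ_mem _ _ hε' hδ' x)]
  exact Tterm_mul τ₁ τ₂ τ₁₂ a c b d a' c' b' d' x₁ y₁ x₂ y₂ ε δ x.1 x.2

theorem goepel_generalized_duplication (τ₁ τ₂ τ₁₂ : ℂ)
    (hτ₁ : 0 < τ₁.im) (hτ₂ : 0 < τ₂.im) (hτ : τ₁₂.im ^ 2 < τ₁.im * τ₂.im)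
    (a b c d e f g h : ℝ) (x₁ y₁ x₂ y₂ : ℂ) :
    theta τ₁ τ₂ τ₁₂ a c b d x₁ y₁ * theta τ₁ τ₂ τ₁₂ e g f h x₂ y₂ =
      ∑ ε ∈ Finset.range 2, ∑ δ ∈ Finset.range 2,
        Theta2 τ₁ τ₂ τ₁₂ ((a + e) / 2 + ε) ((c + g) / 2 + δ) (b + f) (d + h)
            (x₁ + x₂) (y₁ + y₂) *
          Theta2 τ₁ τ₂ τ₁₂ ((a - e) / 2 + ε) ((c - g) / 2 + δ) (b - f) (d - h)
            (x₁ - x₂) (y₁ - y₂) := by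
  have SF := summable_norm_Tterm τ₁ τ₂ τ₁₂ hτ₁ hτ₂ hτ a c b d x₁ y₁
  have SG := summable_norm_Tterm τ₁ τ₂ τ₁₂ hτ₁ hτ₂ hτ e g f h x₂ y₂
  set H : (ℤ × ℤ) × (ℤ × ℤ) → ℂ := fun pq =>
    Tterm τ₁ τ₂ τ₁₂ a c b d x₁ y₁ pq.1 * Tterm τ₁ τ₂ τ₁₂ e g f h x₂ y₂ pq.2 with hH
  have SHnorm : Summable fun pq : (ℤ × ℤ) × (ℤ × ℤ) => ‖H pq‖ := by
    refine Summable.congr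
      (SF.mul_of_nonneg SG (fun _ => norm_nonneg _) fun _ => norm_nonneg _) fun i => ?_
    rw [hH, norm_mul]
  have Sind : ∀ ε δ : ℤ, Summable (Set.indicator (PS ε δ) H) := fun ε δ =>
    Summable.of_norm_bounded SHnorm fun pq => norm_indicator_le_norm_self _ _
  have hdec : ∀ pq, H pq =
      Set.indicator (PS 0 0) H pq + Set.indicator (PS 0 1) H pq +
        (Set.indicator (PS 1 0) H pq + Set.indicator (PS 1 1) H pq) := by
    intro pq
    rcases Int.emod_two_eq (pq.1.1 - pq.2.1) with h1 | h1 <;>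
      rcases Int.emod_two_eq (pq.1.2 - pq.2.2) with h2 | h2 <;>
      simp only [Set.indicator_apply, PS, Set.mem_setOf_eq, h1, h2] <;> norm_num
  have key : theta τ₁ τ₂ τ₁₂ a c b d x₁ y₁ * theta τ₁ τ₂ τ₁₂ e g f h x₂ y₂ =
      (∑' pq, Set.indicator (PS 0 0) H pq) + (∑' pq, Set.indicator (PS 0 1) H pq) +
        ((∑' pq, Set.indicator (PS 1 0) H pq) + (∑' pq, Set.indicator (PS 1 1) H pq)) := by
    rw [theta_eq, theta_eq, tsum_mul_tsum_of_summable_norm SF SG]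
    rw [tsum_congr hdec]
    rw [Summable.tsum_add ((Sind 0 0).add (Sind 0 1)) ((Sind 1 0).add (Sind 1 1)),
      Summable.tsum_add (Sind 0 0) (Sind 0 1), Summable.tsum_add (Sind 1 0) (Sind 1 1)]
  rw [key]
  rw [Finset.sum_range_succ, Finset.sum_range_one, Finset.sum_range_succ,
    Finset.sum_range_one, Finset.sum_range_succ, Finset.sum_range_one]
  have p00 := piece_eq τ₁ τ₂ τ₁₂ hτ₁ hτ₂ hτ a c b d e g f h x₁ y₁ x₂ y₂ 0 0
    (by norm_num) (by norm_num)
  have p01 := piece_eq τ₁ τ₂ τ₁₂ hτ₁ hτ₂ hτ a c b d e g f h x₁ y₁ x₂ y₂ 0 1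
    (by norm_num) (by norm_num)
  have p10 := piece_eq τ₁ τ₂ τ₁₂ hτ₁ hτ₂ hτ a c b d e g f h x₁ y₁ x₂ y₂ 1 0
    (by norm_num) (by norm_num)
  have p11 := piece_eq τ₁ τ₂ τ₁₂ hτ₁ hτ₂ hτ a c b d e g f h x₁ y₁ x₂ y₂ 1 1
    (by norm_num) (by norm_num)
  norm_num at p00 p01 p10 p11 ⊢
  rw [p00, p01, p10, p11]
end

section
/- Göpel's original duplication formula: for all real characteristics a, c, b, d and all complex u, v, θ[a,c;b,d](u,v)² = Σ_{(ε,δ)∈{0,1}²} Θ[a+ε, c+δ; 2b, 2d](2u, 2v) · Θ[ε, δ; 0, 0](0, 0). -/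
open Complex

/-- The exponent of one term of the theta series. -/
noncomputable def tExp (τ₁ τ₂ τ₁₂ : ℂ) (a c b d : ℝ) (x y : ℂ) (p : ℤ × ℤ) : ℂ :=
  (Real.pi : ℂ) * Complex.I *
      (τ₁ * ((p.1 : ℂ) + (a : ℂ) / 2) ^ 2 + τ₂ * ((p.2 : ℂ) + (c : ℂ) / 2) ^ 2 +
        2 * τ₁₂ * ((p.1 : ℂ) + (a : ℂ) / 2) * ((p.2 : ℂ) + (c : ℂ) / 2)) +
    2 * (Real.pi : ℂ) * Complex.I *
      (((p.1 : ℂ) + (a : ℂ) / 2) * (x + (b : ℂ) / 2) +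
        ((p.2 : ℂ) + (c : ℂ) / 2) * (y + (d : ℂ) / 2))

lemma theta_eq_tsum (τ₁ τ₂ τ₁₂ : ℂ) (a c b d : ℝ) (x y : ℂ) :
    theta τ₁ τ₂ τ₁₂ a c b d x y
      = ∑' p : ℤ × ℤ, Complex.exp (tExp τ₁ τ₂ τ₁₂ a c b d x y p) := rfl

open Real in
/-- One–dimensional summability. -/
lemma summable_one_dim (α β t : ℝ) (hα : 0 < α) :
    Summable fun m : ℤ =>
      rexp (-(π * (α * ((m : ℝ) + t) ^ 2)) - 2 * π * (((m : ℝ) + t) * β)) := by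
  have h : Summable fun m : ℤ => jacobiTheta₂_term m (((α * t + β) : ℝ) * I) ((α : ℝ) * I) := by
    rw [summable_jacobiTheta₂_term_iff]
    simpa using hα
  have h2 := h.norm
  have h3 := h2.mul_left (rexp (-(π * (α * t ^ 2)) - 2 * π * (t * β)))
  refine h3.congr fun m => ?_
  rw [norm_jacobiTheta₂_term, ← Real.exp_add]
  congr 1
  have h1 : ((((α * t + β) : ℝ) * I).im) = α * t + β := by simp
  have h2' : (((α : ℝ) * I).im) = α := by simp
  rw [h1, h2']
  ring

lemma re_texp (τ₁ τ₂ τ₁₂ : ℂ) (X W : ℝ) (x y : ℂ) :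
    ((Real.pi : ℂ) * Complex.I *
        (τ₁ * (X : ℂ) ^ 2 + τ₂ * (W : ℂ) ^ 2 + 2 * τ₁₂ * (X : ℂ) * (W : ℂ)) +
      2 * (Real.pi : ℂ) * Complex.I * ((X : ℂ) * x + (W : ℂ) * y)).re
      = -(Real.pi * (τ₁.im * X ^ 2 + τ₂.im * W ^ 2 + 2 * τ₁₂.im * X * W))
        - 2 * Real.pi * (X * x.im + W * y.im) := by
  simp [Complex.add_re, Complex.mul_re, Complex.mul_im, Complex.I_re, Complex.I_im,
    Complex.ofReal_re, Complex.ofReal_im, pow_two]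
  ring

lemma quad_lower {t₁ t₂ t₁₂ : ℝ} (h₁ : 0 < t₁) (h₂ : 0 < t₂) (h : t₁₂ ^ 2 < t₁ * t₂) :
    ∃ c₁ c₂ : ℝ, 0 < c₁ ∧ 0 < c₂ ∧
      ∀ X W : ℝ, c₁ * X ^ 2 + c₂ * W ^ 2 ≤ t₁ * X ^ 2 + t₂ * W ^ 2 + 2 * t₁₂ * X * W := by
  set s : ℝ := (t₁₂ ^ 2 / t₂ + t₁) / 2 with hs_def
  have hst : t₁₂ ^ 2 / t₂ < t₁ := (div_lt_iff₀ h₂).2 h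
  have hs0 : 0 < s := by positivity
  have hs1 : s < t₁ := by
    rw [hs_def]
    nlinarith [sq_nonneg t₁₂, div_nonneg (sq_nonneg t₁₂) h₂.le]
  have hs2 : t₁₂ ^ 2 / t₂ < s := by
    rw [hs_def]; nlinarith
  refine ⟨t₁ - s, t₂ - t₁₂ ^ 2 / s, by linarith, ?_, ?_⟩
  · have : t₁₂ ^ 2 / s < t₂ := by
      rw [div_lt_iff₀ hs0]
      calc t₁₂ ^ 2 = (t₁₂ ^ 2 / t₂) * t₂ := by field_simp
        _ < s * t₂ := by exact mul_lt_mul_of_pos_right hs2 h₂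
        _ = t₂ * s := by ring
    linarith
  · intro X W
    have key : 0 ≤ s * X ^ 2 + (t₁₂ ^ 2 / s) * W ^ 2 + 2 * t₁₂ * X * W := by
      have h4 : t₁₂ ^ 2 / s * s = t₁₂ ^ 2 := div_mul_cancel₀ _ hs0.ne'
      nlinarith [sq_nonneg (s * X + t₁₂ * W), hs0]
    linarith

lemma summable_norm_tTerm {τ₁ τ₂ τ₁₂ : ℂ}
    (hτ₁ : 0 < τ₁.im) (hτ₂ : 0 < τ₂.im) (hτ : τ₁₂.im ^ 2 < τ₁.im * τ₂.im)
    (a c b d : ℝ) (x y : ℂ) :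
    Summable fun p : ℤ × ℤ => ‖Complex.exp (tExp τ₁ τ₂ τ₁₂ a c b d x y p)‖ := by
  obtain ⟨c₁, c₂, hc₁, hc₂, hQ⟩ := quad_lower hτ₁ hτ₂ hτ
  have hg := summable_one_dim c₁ (x + (b : ℂ) / 2).im (a / 2) hc₁
  have hh := summable_one_dim c₂ (y + (d : ℂ) / 2).im (c / 2) hc₂
  have hprod := hg.mul_of_nonneg hh (fun _ => Real.exp_nonneg _) (fun _ => Real.exp_nonneg _)
  refine Summable.of_nonneg_of_le (fun _ => norm_nonneg _) (fun p => ?_) hprod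
  rw [Complex.norm_exp]
  have hcast1 : ((p.1 : ℂ) + (a : ℂ) / 2) = (((p.1 : ℝ) + a / 2 : ℝ) : ℂ) := by push_cast; ring
  have hcast2 : ((p.2 : ℂ) + (c : ℂ) / 2) = (((p.2 : ℝ) + c / 2 : ℝ) : ℂ) := by push_cast; ring
  have hre : (tExp τ₁ τ₂ τ₁₂ a c b d x y p).re
      = -(Real.pi * (τ₁.im * ((p.1 : ℝ) + a / 2) ^ 2 + τ₂.im * ((p.2 : ℝ) + c / 2) ^ 2
          + 2 * τ₁₂.im * ((p.1 : ℝ) + a / 2) * ((p.2 : ℝ) + c / 2)))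
        - 2 * Real.pi * (((p.1 : ℝ) + a / 2) * (x + (b : ℂ) / 2).im
          + ((p.2 : ℝ) + c / 2) * (y + (d : ℂ) / 2).im) := by
    rw [tExp, hcast1, hcast2]
    exact re_texp τ₁ τ₂ τ₁₂ _ _ _ _
  rw [hre, ← Real.exp_add]
  apply Real.exp_le_exp.2
  have := hQ ((p.1 : ℝ) + a / 2) ((p.2 : ℝ) + c / 2)
  have hπ : (0 : ℝ) < Real.pi := Real.pi_pos
  nlinarith [this]

lemma summable_tTerm {τ₁ τ₂ τ₁₂ : ℂ}
    (hτ₁ : 0 < τ₁.im) (hτ₂ : 0 < τ₂.im) (hτ : τ₁₂.im ^ 2 < τ₁.im * τ₂.im)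
    (a c b d : ℝ) (x y : ℂ) :
    Summable fun p : ℤ × ℤ => Complex.exp (tExp τ₁ τ₂ τ₁₂ a c b d x y p) :=
  (summable_norm_tTerm hτ₁ hτ₂ hτ a c b d x y).of_norm

/-- The reindexing bijection. -/
def shear : (Fin 2 × Fin 2) × ((ℤ × ℤ) × (ℤ × ℤ)) ≃ (ℤ × ℤ) × (ℤ × ℤ) where
  toFun w :=
    ((w.2.1.1 + w.2.2.1 + (w.1.1.val : ℤ), w.2.1.2 + w.2.2.2 + (w.1.2.val : ℤ)),
      (w.2.1.1 - w.2.2.1, w.2.1.2 - w.2.2.2))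
  invFun z :=
    ((⟨((z.1.1 - z.2.1) % 2).toNat, by omega⟩, ⟨((z.1.2 - z.2.2) % 2).toNat, by omega⟩),
      ((z.2.1 + (z.1.1 - z.2.1 - (z.1.1 - z.2.1) % 2) / 2,
        z.2.2 + (z.1.2 - z.2.2 - (z.1.2 - z.2.2) % 2) / 2),
       ((z.1.1 - z.2.1 - (z.1.1 - z.2.1) % 2) / 2,
        (z.1.2 - z.2.2 - (z.1.2 - z.2.2) % 2) / 2)))
  left_inv := by
    rintro ⟨⟨⟨e, he⟩, ⟨f, hf⟩⟩, ⟨⟨k, l⟩, ⟨k', l'⟩⟩⟩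
    simp only [Prod.mk.injEq, Fin.mk.injEq]
    refine ⟨⟨?_, ?_⟩, ⟨?_, ?_⟩, ?_, ?_⟩ <;> omega
  right_inv := by
    rintro ⟨⟨m, n⟩, ⟨m', n'⟩⟩
    simp only [Prod.mk.injEq]
    refine ⟨⟨?_, ?_⟩, ?_, ?_⟩ <;> omega

/-- The key exponent identity. -/
lemma texp_add (τ₁ τ₂ τ₁₂ : ℂ) (a c b d : ℝ) (u v : ℂ) (ε δ : ℕ) (k l k' l' : ℤ) :
    tExp τ₁ τ₂ τ₁₂ a c b d u v (k + k' + (ε : ℤ), l + l' + (δ : ℤ))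
      + tExp τ₁ τ₂ τ₁₂ a c b d u v (k - k', l - l')
    = tExp (2 * τ₁) (2 * τ₂) (2 * τ₁₂) (a + ε) (c + δ) (2 * b) (2 * d) (2 * u) (2 * v) (k, l)
      + tExp (2 * τ₁) (2 * τ₂) (2 * τ₁₂) (ε : ℝ) (δ : ℝ) 0 0 0 0 (k', l') := by
  simp only [tExp]
  push_cast
  ring

set_option maxHeartbeats 1000000 in
theorem goepel_original_duplication (τ₁ τ₂ τ₁₂ : ℂ)
    (hτ₁ : 0 < τ₁.im) (hτ₂ : 0 < τ₂.im) (hτ : τ₁₂.im ^ 2 < τ₁.im * τ₂.im)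
    (a c b d : ℝ) (u v : ℂ) :
    theta τ₁ τ₂ τ₁₂ a c b d u v ^ 2 =
      ∑ ε ∈ Finset.range 2, ∑ δ ∈ Finset.range 2,
        Theta2 τ₁ τ₂ τ₁₂ (a + ε) (c + δ) (2 * b) (2 * d) (2 * u) (2 * v) *
          Theta2 τ₁ τ₂ τ₁₂ ε δ 0 0 0 0 := by
  -- doubled-moduli hypotheses
  have h2τ₁ : 0 < (2 * τ₁).im := by simp [Complex.mul_im]; linarith
  have h2τ₂ : 0 < (2 * τ₂).im := by simp [Complex.mul_im]; linarith
  have h2τ : (2 * τ₁₂).im ^ 2 < (2 * τ₁).im * (2 * τ₂).im := by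
    simp [Complex.mul_im]; nlinarith
  set f : ℤ × ℤ → ℂ := fun p => Complex.exp (tExp τ₁ τ₂ τ₁₂ a c b d u v p) with hf_def
  have hf : Summable fun p => ‖f p‖ := summable_norm_tTerm hτ₁ hτ₂ hτ a c b d u v
  have step1 : theta τ₁ τ₂ τ₁₂ a c b d u v ^ 2
      = ∑' z : (ℤ × ℤ) × (ℤ × ℤ), f z.1 * f z.2 := by
    rw [sq, theta_eq_tsum]
    exact tsum_mul_tsum_of_summable_norm hf hf
  have hFsum : Summable fun z : (ℤ × ℤ) × (ℤ × ℤ) => f z.1 * f z.2 :=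
    summable_mul_of_summable_norm hf hf
  have step2 : (∑' z : (ℤ × ℤ) × (ℤ × ℤ), f z.1 * f z.2)
      = ∑' w : (Fin 2 × Fin 2) × ((ℤ × ℤ) × (ℤ × ℤ)),
          f (shear w).1 * f (shear w).2 :=
    (shear.tsum_eq fun z => f z.1 * f z.2).symm
  have hWsum0 : Summable ((fun z : (ℤ × ℤ) × (ℤ × ℤ) => f z.1 * f z.2) ∘ shear) :=
    shear.summable_iff.2 hFsum
  have hWsum : Summable fun w : (Fin 2 × Fin 2) × ((ℤ × ℤ) × (ℤ × ℤ)) =>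
      f (shear w).1 * f (shear w).2 := hWsum0.congr fun w => rfl
  have step3 : (∑' w : (Fin 2 × Fin 2) × ((ℤ × ℤ) × (ℤ × ℤ)),
        f (shear w).1 * f (shear w).2)
      = ∑ εδ : Fin 2 × Fin 2, ∑' z : (ℤ × ℤ) × (ℤ × ℤ),
          f (shear (εδ, z)).1 * f (shear (εδ, z)).2 := by
    rw [Summable.tsum_prod hWsum, tsum_fintype]
  -- pointwise identity
  have key : ∀ (ε δ : ℕ) (z : (ℤ × ℤ) × (ℤ × ℤ)) (hε : ε < 2) (hδ : δ < 2),
      f (shear ((⟨ε, hε⟩, ⟨δ, hδ⟩), z)).1 * f (shear ((⟨ε, hε⟩, ⟨δ, hδ⟩), z)).2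
      = Complex.exp (tExp (2*τ₁) (2*τ₂) (2*τ₁₂) (a + ε) (c + δ) (2*b) (2*d) (2*u) (2*v) z.1)
        * Complex.exp (tExp (2*τ₁) (2*τ₂) (2*τ₁₂) (ε : ℝ) (δ : ℝ) 0 0 0 0 z.2) := by
    rintro ε δ ⟨⟨k, l⟩, ⟨k', l'⟩⟩ hε hδ
    simp only [hf_def, shear, Equiv.coe_fn_mk, ← Complex.exp_add]
    rw [texp_add τ₁ τ₂ τ₁₂ a c b d u v ε δ k l k' l']
  -- inner tsum factors
  have inner : ∀ (ε δ : ℕ),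
      (∑' z : (ℤ × ℤ) × (ℤ × ℤ),
        Complex.exp (tExp (2*τ₁) (2*τ₂) (2*τ₁₂) (a + ε) (c + δ) (2*b) (2*d) (2*u) (2*v) z.1)
        * Complex.exp (tExp (2*τ₁) (2*τ₂) (2*τ₁₂) (ε : ℝ) (δ : ℝ) 0 0 0 0 z.2))
      = Theta2 τ₁ τ₂ τ₁₂ (a + ε) (c + δ) (2 * b) (2 * d) (2 * u) (2 * v) *
          Theta2 τ₁ τ₂ τ₁₂ ε δ 0 0 0 0 := by
    intro ε δ
    rw [Theta2, Theta2, theta_eq_tsum, theta_eq_tsum]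
    exact (tsum_mul_tsum_of_summable_norm
      (summable_norm_tTerm h2τ₁ h2τ₂ h2τ _ _ _ _ _ _)
      (summable_norm_tTerm h2τ₁ h2τ₂ h2τ _ _ _ _ _ _)).symm
  rw [step1, step2, step3]
  have e0 : (0 : Fin 2) = ⟨0, by norm_num⟩ := rfl
  have e1 : (1 : Fin 2) = ⟨1, by norm_num⟩ := rfl
  simp only [Fintype.sum_prod_type, Fin.sum_univ_two, e0, e1,
    Finset.sum_range_succ, Finset.sum_range_zero, Finset.sum_range_one]
  rw [tsum_congr (fun z => key 0 0 z (by norm_num) (by norm_num)),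
    tsum_congr (fun z => key 0 1 z (by norm_num) (by norm_num)),
    tsum_congr (fun z => key 1 0 z (by norm_num) (by norm_num)),
    tsum_congr (fun z => key 1 1 z (by norm_num) (by norm_num)),
    inner 0 0, inner 0 1, inner 1 0, inner 1 1]
  norm_num
end

section
/- Riemann matrix functional relation: for every pair (a',c') ∈ {0,1}² and all complex u, v, 4 · Θ[a',c';0,0](2u,2v) · Θ[a',c';0,0](0,0) = Σ_{(b,d)∈{0,1}²} (−1)^{a'b + c'd} · θ[0,0;b,d](u,v)². -/
open Complex

noncomputable section ThetaAux

def thetaTerm (τ₁ τ₂ τ₁₂ : ℂ) (a c b d : ℝ) (x y : ℂ) (p : ℤ × ℤ) : ℂ :=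
  Complex.exp
      ((Real.pi : ℂ) * Complex.I *
          (τ₁ * ((p.1 : ℂ) + (a : ℂ) / 2) ^ 2 + τ₂ * ((p.2 : ℂ) + (c : ℂ) / 2) ^ 2 +
            2 * τ₁₂ * ((p.1 : ℂ) + (a : ℂ) / 2) * ((p.2 : ℂ) + (c : ℂ) / 2)) +
        2 * (Real.pi : ℂ) * Complex.I *
          (((p.1 : ℂ) + (a : ℂ) / 2) * (x + (b : ℂ) / 2) +
            ((p.2 : ℂ) + (c : ℂ) / 2) * (y + (d : ℂ) / 2)))

lemma norm_aux (t1 t2 t3 : ℂ) (μ ν : ℝ) (X Y : ℂ) :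
    ‖Complex.exp ((Real.pi:ℂ)*I*(t1*(μ:ℂ)^2 + t2*(ν:ℂ)^2 + 2*t3*(μ:ℂ)*(ν:ℂ))
      + 2*(Real.pi:ℂ)*I*((μ:ℂ)*X + (ν:ℂ)*Y))‖
    = Real.exp (-Real.pi*(t1.im*μ^2 + t2.im*ν^2 + 2*t3.im*μ*ν + 2*(μ*X.im + ν*Y.im))) := by
  rw [Complex.norm_exp]
  congr 1
  simp [Complex.mul_re, Complex.mul_im, Complex.add_re, Complex.add_im,
    Complex.I_re, Complex.I_im, Complex.ofReal_re, Complex.ofReal_im, sq]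
  ring

lemma norm_thetaTerm (τ₁ τ₂ τ₁₂ : ℂ) (a c b d : ℝ) (x y : ℂ) (p : ℤ × ℤ) :
    ‖thetaTerm τ₁ τ₂ τ₁₂ a c b d x y p‖ =
      Real.exp (-Real.pi * (τ₁.im * ((p.1:ℝ)+a/2)^2 + τ₂.im * ((p.2:ℝ)+c/2)^2
        + 2*τ₁₂.im*((p.1:ℝ)+a/2)*((p.2:ℝ)+c/2)
        + 2*(((p.1:ℝ)+a/2)*x.im + ((p.2:ℝ)+c/2)*y.im))) := by
  have h1 : ((p.1 : ℂ) + (a : ℂ)/2) = (((p.1:ℝ) + a/2 : ℝ) : ℂ) := by push_cast; ring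
  have h2 : ((p.2 : ℂ) + (c : ℂ)/2) = (((p.2:ℝ) + c/2 : ℝ) : ℂ) := by push_cast; ring
  have h3 : (x + (b:ℂ)/2).im = x.im := by
    rw [show ((b:ℂ)/2) = (((b/2 : ℝ)):ℂ) by push_cast; ring]; simp
  have h4 : (y + (d:ℂ)/2).im = y.im := by
    rw [show ((d:ℂ)/2) = (((d/2 : ℝ)):ℂ) by push_cast; ring]; simp
  rw [thetaTerm, h1, h2, norm_aux, h3, h4]

lemma summable_geom_int {r : ℝ} (h0 : 0 ≤ r) (h1 : r < 1) :
    Summable fun m : ℤ => r ^ m.natAbs := by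
  apply Summable.of_nat_of_neg <;>
    simpa using summable_geometric_of_lt_one h0 h1

lemma summable_exp_quad (c B : ℝ) (hc : 0 < c) :
    Summable fun m : ℤ => Real.exp (-c * (m:ℝ)^2 + B * |(m:ℝ)|) := by
  have hr0 : (0:ℝ) ≤ Real.exp (-(c/2)) := (Real.exp_pos _).le
  have hr1 : Real.exp (-(c/2)) < 1 := Real.exp_lt_one_iff.mpr (by linarith)
  apply Summable.of_nonneg_of_le (fun m => (Real.exp_pos _).le)
    (f := fun m : ℤ => Real.exp (B^2/(2*c)) * Real.exp (-(c/2)) ^ m.natAbs) ?_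
    (((summable_geom_int hr0 hr1)).mul_left _)
  intro m
  have hab : |(m:ℝ)| = ((m.natAbs : ℕ) : ℝ) := by
    simp [Nat.cast_natAbs]
  have hx0 : (0:ℝ) ≤ |(m:ℝ)| := abs_nonneg _
  have hx2 : |(m:ℝ)| ≤ |(m:ℝ)|^2 := by
    rcases Nat.eq_zero_or_pos m.natAbs with h | h
    · rw [hab, h]; norm_num
    · have : (1:ℝ) ≤ |(m:ℝ)| := by rw [hab]; exact_mod_cast h
      nlinarith
  have key : -c * (m:ℝ)^2 + B * |(m:ℝ)| ≤ B^2/(2*c) + (-(c/2)) * |(m:ℝ)| := by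
    have hsq : (0:ℝ) ≤ (c * |(m:ℝ)| - B)^2 := sq_nonneg _
    have habs : (m:ℝ)^2 = |(m:ℝ)|^2 := (_root_.sq_abs _).symm
    have hdiv : B^2/(2*c) * (2*c) = B^2 := div_mul_cancel₀ _ (by positivity)
    rw [habs]
    nlinarith [hsq, hc, hdiv, mul_le_mul_of_nonneg_left hx2 (mul_pos hc hc).le]
  calc Real.exp (-c * (m:ℝ)^2 + B * |(m:ℝ)|)
      ≤ Real.exp (B^2/(2*c) + (-(c/2)) * |(m:ℝ)|) := Real.exp_le_exp.2 key
    _ = Real.exp (B^2/(2*c)) * Real.exp (-(c/2)) ^ m.natAbs := by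
        rw [Real.exp_add, hab, ← Real.exp_nat_mul]
        ring_nf

lemma summable_exp_quad_shift (c B t : ℝ) (hc : 0 < c) :
    Summable fun m : ℤ => Real.exp (-c * ((m:ℝ)+t)^2 + B * |(m:ℝ)+t|) := by
  apply Summable.of_nonneg_of_le (fun _ => (Real.exp_pos _).le) ?_
    ((summable_exp_quad (c/2) (|B|) (by linarith)).mul_left
      (Real.exp (c*t^2 + |B| * |t|)))
  intro m
  rw [← Real.exp_add]
  apply Real.exp_le_exp.2
  have h2 : (m:ℝ)^2 ≤ 2*((m:ℝ)+t)^2 + 2*t^2 := by nlinarith [sq_nonneg ((m:ℝ)+2*t)]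
  have h3 : B*|(m:ℝ)+t| ≤ |B| * (|(m:ℝ)|+|t|) := by
    calc B*|(m:ℝ)+t| ≤ |B| * |(m:ℝ)+t| :=
          mul_le_mul_of_nonneg_right (le_abs_self B) (abs_nonneg _)
    _ ≤ _ := mul_le_mul_of_nonneg_left (abs_add_le _ _) (abs_nonneg _)
  have h4 := mul_le_mul_of_nonneg_left h2 (by linarith : (0:ℝ) ≤ c/2)
  linarith

lemma posdef {Y₁ Y₂ Y₁₂ : ℝ} (h₁ : 0 < Y₁) (h₂ : 0 < Y₂) (h : Y₁₂^2 < Y₁*Y₂) :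
    ∃ ε > 0, ∀ μ ν : ℝ, ε*μ^2 + ε*ν^2 ≤ Y₁*μ^2 + Y₂*ν^2 + 2*Y₁₂*μ*ν := by
  set D : ℝ := Y₁*Y₂ - Y₁₂^2 with hD
  have hD0 : 0 < D := by simp [hD]; linarith
  set ε : ℝ := min (min Y₁ Y₂) (D/(Y₁+Y₂)) / 2 with hε
  have hεpos : 0 < ε :=
    half_pos (lt_min (lt_min h₁ h₂) (div_pos hD0 (by linarith)))
  refine ⟨ε, hεpos, fun μ ν => ?_⟩
  have hε1 : ε ≤ Y₁/2 := by
    have : min (min Y₁ Y₂) (D/(Y₁+Y₂)) ≤ Y₁ := le_trans (min_le_left _ _) (min_le_left _ _)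
    simp only [hε]; linarith
  have hε2 : ε ≤ Y₂/2 := by
    have : min (min Y₁ Y₂) (D/(Y₁+Y₂)) ≤ Y₂ := le_trans (min_le_left _ _) (min_le_right _ _)
    simp only [hε]; linarith
  have hε3 : ε * (Y₁+Y₂) ≤ D/2 := by
    have h5 : min (min Y₁ Y₂) (D/(Y₁+Y₂)) ≤ D/(Y₁+Y₂) := min_le_right _ _
    have h6 : ε ≤ D/(Y₁+Y₂)/2 := by simp only [hε]; linarith
    have h7 : D/(Y₁+Y₂)/2 * (Y₁+Y₂) = D/2 := by field_simp
    calc ε * (Y₁+Y₂) ≤ D/(Y₁+Y₂)/2 * (Y₁+Y₂) :=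
          mul_le_mul_of_nonneg_right h6 (by linarith)
    _ = D/2 := h7
  have hA : 0 < Y₁ - ε := by linarith
  have hdet : Y₁₂^2 ≤ (Y₁-ε)*(Y₂-ε) := by nlinarith [sq_nonneg ε]
  nlinarith [sq_nonneg ((Y₁-ε)*μ + Y₁₂*ν), hA, hdet, sq_nonneg ν,
    mul_le_mul_of_nonneg_right hdet (sq_nonneg ν), mul_pos hA hA]

lemma summable_norm_thetaTerm {τ₁ τ₂ τ₁₂ : ℂ} (hτ₁ : 0 < τ₁.im) (hτ₂ : 0 < τ₂.im)
    (hτ : τ₁₂.im ^ 2 < τ₁.im * τ₂.im) (a c b d : ℝ) (x y : ℂ) :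
    Summable fun p : ℤ × ℤ => ‖thetaTerm τ₁ τ₂ τ₁₂ a c b d x y p‖ := by
  obtain ⟨ε, hε, hQ⟩ := posdef hτ₁ hτ₂ hτ
  have hπ := Real.pi_pos
  have hg := summable_exp_quad_shift (Real.pi*ε) (2*Real.pi*|x.im|) (a/2) (by positivity)
  have hh := summable_exp_quad_shift (Real.pi*ε) (2*Real.pi*|y.im|) (c/2) (by positivity)
  apply Summable.of_nonneg_of_le (fun _ => norm_nonneg _) ?_
    (hg.mul_of_nonneg hh (fun _ => (Real.exp_pos _).le) (fun _ => (Real.exp_pos _).le))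
  intro p
  rw [norm_thetaTerm, ← Real.exp_add]
  apply Real.exp_le_exp.2
  set μ : ℝ := (p.1:ℝ) + a/2
  set ν : ℝ := (p.2:ℝ) + c/2
  have h1 := hQ μ ν
  have h2 : -(μ*x.im) ≤ |x.im| * |μ| := by
    calc -(μ*x.im) ≤ |μ*x.im| := neg_le_abs _
    _ = |x.im| * |μ| := by rw [abs_mul]; ring
  have h3 : -(ν*y.im) ≤ |y.im| * |ν| := by
    calc -(ν*y.im) ≤ |ν*y.im| := neg_le_abs _
    _ = |y.im| * |ν| := by rw [abs_mul]; ring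
  have h1' := mul_le_mul_of_nonneg_left h1 hπ.le
  have h2' := mul_le_mul_of_nonneg_left h2 (by linarith : (0:ℝ) ≤ 2*Real.pi)
  have h3' := mul_le_mul_of_nonneg_left h3 (by linarith : (0:ℝ) ≤ 2*Real.pi)
  nlinarith [h1', h2', h3']

def embMap (a' c' : ℕ) (w : (ℤ×ℤ)×(ℤ×ℤ)) : (ℤ×ℤ)×(ℤ×ℤ) :=
  ((w.1.1 + w.2.1 + a', w.1.2 + w.2.2 + c'), (w.1.1 - w.2.1, w.1.2 - w.2.2))

lemma embMap_inj (a' c' : ℕ) : Function.Injective (embMap a' c') := by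
  intro w w' h
  simp only [embMap, Prod.ext_iff] at h ⊢
  omega

def Gfun (τ₁ τ₂ τ₁₂ u v : ℂ) (a' c' : ℕ) (z : (ℤ×ℤ)×(ℤ×ℤ)) : ℂ :=
  Complex.exp ((Real.pi:ℂ)*I*(τ₁*(z.1.1:ℂ)^2 + τ₂*(z.1.2:ℂ)^2 + 2*τ₁₂*(z.1.1:ℂ)*(z.1.2:ℂ)
      + (τ₁*(z.2.1:ℂ)^2 + τ₂*(z.2.2:ℂ)^2 + 2*τ₁₂*(z.2.1:ℂ)*(z.2.2:ℂ)))
    + 2*(Real.pi:ℂ)*I*(((z.1.1:ℂ)+(z.2.1:ℂ))*u + ((z.1.2:ℂ)+(z.2.2:ℂ))*v))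
  * ((1 + (-1:ℂ)^((a':ℤ) + z.1.1 + z.2.1)) * (1 + (-1:ℂ)^((c':ℤ) + z.1.2 + z.2.2)))

lemma Gfun_support (τ₁ τ₂ τ₁₂ u v : ℂ) (a' c' : ℕ) :
    Function.support (Gfun τ₁ τ₂ τ₁₂ u v a' c') ⊆ Set.range (embMap a' c') := by
  intro z hz
  have h1 : Even ((a':ℤ) + z.1.1 + z.2.1) := by
    by_contra ho
    rw [Int.not_even_iff_odd] at ho
    exact hz (by simp [Gfun, ho.neg_one_zpow])
  have h2 : Even ((c':ℤ) + z.1.2 + z.2.2) := by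
    by_contra ho
    rw [Int.not_even_iff_odd] at ho
    exact hz (by simp [Gfun, ho.neg_one_zpow])
  obtain ⟨t, ht⟩ := h1
  obtain ⟨s, hs⟩ := h2
  refine ⟨((t - a', s - c'), (t - a' - z.2.1, s - c' - z.2.2)), ?_⟩
  simp only [embMap, Prod.ext_iff]
  refine ⟨⟨?_, ?_⟩, ?_, ?_⟩ <;> omega

lemma G_emb (τ₁ τ₂ τ₁₂ u v : ℂ) (a' c' : ℕ) (w : (ℤ×ℤ)×(ℤ×ℤ)) :
    Gfun τ₁ τ₂ τ₁₂ u v a' c' (embMap a' c' w) =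
      4 * (thetaTerm (2*τ₁) (2*τ₂) (2*τ₁₂) (a':ℝ) (c':ℝ) 0 0 (2*u) (2*v) w.1 *
           thetaTerm (2*τ₁) (2*τ₂) (2*τ₁₂) (a':ℝ) (c':ℝ) 0 0 0 0 w.2) := by
  obtain ⟨⟨M, N⟩, K, L⟩ := w
  simp only [Gfun, embMap, thetaTerm]
  have e1 : ((a':ℤ) + (M + K + a') + (M - K)) = (M + a') + (M + a') := by ring
  have e2 : ((c':ℤ) + (N + L + c') + (N - L)) = (N + c') + (N + c') := by ring
  rw [e1, e2, Even.neg_one_zpow ⟨M + (a':ℤ), rfl⟩, Even.neg_one_zpow ⟨N + (c':ℤ), rfl⟩,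
    ← Complex.exp_add]
  rw [show ((1:ℂ)+1)*((1:ℂ)+1) = 4 by norm_num, mul_comm]
  congr 2
  push_cast
  ring

lemma thetaTerm_bd (τ₁ τ₂ τ₁₂ u v : ℂ) (b d : ℕ) (p : ℤ×ℤ) :
    thetaTerm τ₁ τ₂ τ₁₂ 0 0 (b:ℝ) (d:ℝ) u v p =
      thetaTerm τ₁ τ₂ τ₁₂ 0 0 0 0 u v p *
        Complex.exp ((Real.pi:ℂ)*I*((p.1:ℂ)*(b:ℂ) + (p.2:ℂ)*(d:ℂ))) := by
  simp only [thetaTerm]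
  rw [← Complex.exp_add]
  congr 1
  push_cast
  ring

lemma neg_one_zpow_eq (j : ℕ) (k l : ℤ) :
    (-1:ℂ)^((j:ℤ) + k + l) =
      (-1:ℂ)^j * Complex.exp ((Real.pi:ℂ)*I*((k:ℂ)+(l:ℂ))) := by
  rw [show ((j:ℤ) + k + l) = (j:ℤ) + (k + l) by ring,
    zpow_add₀ (by norm_num : (-1:ℂ) ≠ 0), zpow_natCast]
  congr 1
  rw [show (Real.pi:ℂ)*I*((k:ℂ)+(l:ℂ)) = (((k+l : ℤ)):ℂ)*((Real.pi:ℂ)*I) by push_cast; ring,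
    Complex.exp_int_mul, Complex.exp_pi_mul_I]

lemma sum_bd (τ₁ τ₂ τ₁₂ u v : ℂ) (a' c' : ℕ) (z : (ℤ×ℤ)×(ℤ×ℤ)) :
    ∑ b ∈ Finset.range 2, ∑ d ∈ Finset.range 2,
      (-1:ℂ)^(a'*b + c'*d) *
        (thetaTerm τ₁ τ₂ τ₁₂ 0 0 (b:ℝ) (d:ℝ) u v z.1 *
         thetaTerm τ₁ τ₂ τ₁₂ 0 0 (b:ℝ) (d:ℝ) u v z.2) =
    Gfun τ₁ τ₂ τ₁₂ u v a' c' z := by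
  obtain ⟨⟨m, n⟩, m', n'⟩ := z
  have hP : Complex.exp ((Real.pi:ℂ)*I*(τ₁*(m:ℂ)^2 + τ₂*(n:ℂ)^2 + 2*τ₁₂*(m:ℂ)*(n:ℂ)
      + (τ₁*(m':ℂ)^2 + τ₂*(n':ℂ)^2 + 2*τ₁₂*(m':ℂ)*(n':ℂ)))
    + 2*(Real.pi:ℂ)*I*(((m:ℂ)+(m':ℂ))*u + ((n:ℂ)+(n':ℂ))*v)) =
      thetaTerm τ₁ τ₂ τ₁₂ 0 0 0 0 u v (m, n) * thetaTerm τ₁ τ₂ τ₁₂ 0 0 0 0 u v (m', n') := by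
    simp only [thetaTerm]
    rw [← Complex.exp_add]
    congr 1
    push_cast
    ring
  simp only [Gfun, neg_one_zpow_eq, hP]
  simp only [Finset.sum_range_succ, Finset.sum_range_zero, zero_add, thetaTerm_bd]
  push_cast
  simp only [mul_zero, zero_mul, mul_one, one_mul, add_zero, zero_add,
    Complex.exp_zero, pow_zero, pow_add, pow_mul, pow_one]
  ring_nf
  simp only [Complex.exp_add]
  ring_nf

end ThetaAux

theorem riemann_matrix_functional_relation (τ₁ τ₂ τ₁₂ : ℂ)
    (hτ₁ : 0 < τ₁.im) (hτ₂ : 0 < τ₂.im) (hτ : τ₁₂.im ^ 2 < τ₁.im * τ₂.im)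
    (a' c' : ℕ) (ha : a' ∈ ({0, 1} : Set ℕ)) (hc : c' ∈ ({0, 1} : Set ℕ))
    (u v : ℂ) :
    4 * Theta2 τ₁ τ₂ τ₁₂ a' c' 0 0 (2 * u) (2 * v) * Theta2 τ₁ τ₂ τ₁₂ a' c' 0 0 0 0 =
      ∑ b ∈ Finset.range 2, ∑ d ∈ Finset.range 2,
        (-1 : ℂ) ^ (a' * b + c' * d) * theta τ₁ τ₂ τ₁₂ 0 0 b d u v ^ 2 := by
  have him1 : (2*τ₁).im = 2*τ₁.im := by simp [Complex.mul_im]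
  have him2 : (2*τ₂).im = 2*τ₂.im := by simp [Complex.mul_im]
  have him3 : (2*τ₁₂).im = 2*τ₁₂.im := by simp [Complex.mul_im]
  have h2τ₁ : 0 < (2*τ₁).im := by rw [him1]; linarith
  have h2τ₂ : 0 < (2*τ₂).im := by rw [him2]; linarith
  have h2τ : (2*τ₁₂).im ^ 2 < (2*τ₁).im * (2*τ₂).im := by
    rw [him1, him2, him3]; nlinarith
  have hA : Summable fun p : ℤ×ℤ =>
      ‖thetaTerm (2*τ₁) (2*τ₂) (2*τ₁₂) (a':ℝ) (c':ℝ) 0 0 (2*u) (2*v) p‖ :=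
    summable_norm_thetaTerm h2τ₁ h2τ₂ h2τ _ _ _ _ _ _
  have hB : Summable fun p : ℤ×ℤ =>
      ‖thetaTerm (2*τ₁) (2*τ₂) (2*τ₁₂) (a':ℝ) (c':ℝ) 0 0 0 0 p‖ :=
    summable_norm_thetaTerm h2τ₁ h2τ₂ h2τ _ _ _ _ _ _
  have hf : ∀ b d : ℕ, Summable fun p : ℤ×ℤ =>
      ‖thetaTerm τ₁ τ₂ τ₁₂ 0 0 (b:ℝ) (d:ℝ) u v p‖ :=
    fun b d => summable_norm_thetaTerm hτ₁ hτ₂ hτ _ _ _ _ _ _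
  have hsummand : ∀ b d : ℕ, Summable (fun z : (ℤ×ℤ)×(ℤ×ℤ) =>
      (-1:ℂ)^(a'*b+c'*d) *
        (thetaTerm τ₁ τ₂ τ₁₂ 0 0 (b:ℝ) (d:ℝ) u v z.1 *
         thetaTerm τ₁ τ₂ τ₁₂ 0 0 (b:ℝ) (d:ℝ) u v z.2)) :=
    fun b d => (summable_mul_of_summable_norm (hf b d) (hf b d)).mul_left _
  have hRHS : (∑ b ∈ Finset.range 2, ∑ d ∈ Finset.range 2,
        (-1 : ℂ) ^ (a' * b + c' * d) * theta τ₁ τ₂ τ₁₂ 0 0 b d u v ^ 2) =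
      ∑' z : (ℤ×ℤ)×(ℤ×ℤ), Gfun τ₁ τ₂ τ₁₂ u v a' c' z := by
    have step1 : ∀ b d : ℕ,
        (-1 : ℂ) ^ (a' * b + c' * d) * theta τ₁ τ₂ τ₁₂ 0 0 b d u v ^ 2 =
        ∑' z : (ℤ×ℤ)×(ℤ×ℤ), (-1:ℂ)^(a'*b+c'*d) *
          (thetaTerm τ₁ τ₂ τ₁₂ 0 0 (b:ℝ) (d:ℝ) u v z.1 *
           thetaTerm τ₁ τ₂ τ₁₂ 0 0 (b:ℝ) (d:ℝ) u v z.2) := by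
      intro b d
      rw [sq, show theta τ₁ τ₂ τ₁₂ 0 0 (b:ℝ) (d:ℝ) u v =
          ∑' p : ℤ×ℤ, thetaTerm τ₁ τ₂ τ₁₂ 0 0 (b:ℝ) (d:ℝ) u v p from rfl,
        tsum_mul_tsum_of_summable_norm (hf b d) (hf b d), tsum_mul_left]
    calc (∑ b ∈ Finset.range 2, ∑ d ∈ Finset.range 2,
        (-1 : ℂ) ^ (a' * b + c' * d) * theta τ₁ τ₂ τ₁₂ 0 0 b d u v ^ 2)
        = ∑ b ∈ Finset.range 2, ∑ d ∈ Finset.range 2,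
          ∑' z : (ℤ×ℤ)×(ℤ×ℤ), (-1:ℂ)^(a'*b+c'*d) *
            (thetaTerm τ₁ τ₂ τ₁₂ 0 0 (b:ℝ) (d:ℝ) u v z.1 *
             thetaTerm τ₁ τ₂ τ₁₂ 0 0 (b:ℝ) (d:ℝ) u v z.2) :=
          Finset.sum_congr rfl fun b _ => Finset.sum_congr rfl fun d _ => step1 b d
      _ = ∑' z : (ℤ×ℤ)×(ℤ×ℤ), ∑ b ∈ Finset.range 2, ∑ d ∈ Finset.range 2,
            (-1:ℂ)^(a'*b+c'*d) *
            (thetaTerm τ₁ τ₂ τ₁₂ 0 0 (b:ℝ) (d:ℝ) u v z.1 *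
             thetaTerm τ₁ τ₂ τ₁₂ 0 0 (b:ℝ) (d:ℝ) u v z.2) := by
          rw [Summable.tsum_finsetSum (fun b _ => summable_sum fun d _ => hsummand b d)]
          exact Finset.sum_congr rfl fun b _ => (Summable.tsum_finsetSum fun d _ => hsummand b d).symm
      _ = ∑' z : (ℤ×ℤ)×(ℤ×ℤ), Gfun τ₁ τ₂ τ₁₂ u v a' c' z :=
          tsum_congr fun z => sum_bd τ₁ τ₂ τ₁₂ u v a' c' z
  rw [hRHS]
  calc 4 * Theta2 τ₁ τ₂ τ₁₂ a' c' 0 0 (2 * u) (2 * v) * Theta2 τ₁ τ₂ τ₁₂ a' c' 0 0 0 0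
      = 4 * ∑' w : (ℤ×ℤ)×(ℤ×ℤ),
          (thetaTerm (2*τ₁) (2*τ₂) (2*τ₁₂) (a':ℝ) (c':ℝ) 0 0 (2*u) (2*v) w.1 *
           thetaTerm (2*τ₁) (2*τ₂) (2*τ₁₂) (a':ℝ) (c':ℝ) 0 0 0 0 w.2) := by
        rw [mul_assoc,
          show Theta2 τ₁ τ₂ τ₁₂ (a':ℝ) (c':ℝ) 0 0 (2*u) (2*v) =
            ∑' p : ℤ×ℤ, thetaTerm (2*τ₁) (2*τ₂) (2*τ₁₂) (a':ℝ) (c':ℝ) 0 0 (2*u) (2*v) p from rfl,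
          show Theta2 τ₁ τ₂ τ₁₂ (a':ℝ) (c':ℝ) 0 0 0 0 =
            ∑' p : ℤ×ℤ, thetaTerm (2*τ₁) (2*τ₂) (2*τ₁₂) (a':ℝ) (c':ℝ) 0 0 0 0 p from rfl,
          tsum_mul_tsum_of_summable_norm hA hB]
    _ = ∑' w : (ℤ×ℤ)×(ℤ×ℤ), 4 *
          (thetaTerm (2*τ₁) (2*τ₂) (2*τ₁₂) (a':ℝ) (c':ℝ) 0 0 (2*u) (2*v) w.1 *
           thetaTerm (2*τ₁) (2*τ₂) (2*τ₁₂) (a':ℝ) (c':ℝ) 0 0 0 0 w.2) := tsum_mul_left.symm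
    _ = ∑' w : (ℤ×ℤ)×(ℤ×ℤ), Gfun τ₁ τ₂ τ₁₂ u v a' c' (embMap a' c' w) :=
        tsum_congr fun w => (G_emb τ₁ τ₂ τ₁₂ u v a' c' w).symm
    _ = ∑' z : (ℤ×ℤ)×(ℤ×ℤ), Gfun τ₁ τ₂ τ₁₂ u v a' c' z :=
        (embMap_inj a' c').tsum_eq (Gfun_support τ₁ τ₂ τ₁₂ u v a' c')
end
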